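/- arXiv:2209.01863 — 2 statements merged into one kernel-verified Lean document; each statement's English description precedes it below -/
import Mathlib

section
/- Fix an input I for the (b,a)-matching problem. For each pair e∈V² let k_e = ⌈α/ℓ_e⌉ and, for each e independently, call every k_e-th request to e in I special; let I₁ be the subsequence of special requests of I, interpreted as an input to the uniform variant (all distances 1, reconfiguration cost 1). Let ALG₁ be any algorithm for the uniform (b,a)-matching problem run on I₁, and let ALG be the algorithm for I that replays exactly the matching reconfigurations that ALG₁ performs on I₁ (so ALG changes the matching only at special requests). Then ALG(I) ≤ 2γα·ALG₁(I₁) + |V²|·γα, where γ = 1 + ℓ_max/α and ℓ_max = max_{e∈V²} ℓ_e. -/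
open scoped ENNReal symmDiff

namespace BM

/-! ### The (dynamic, online) `(b,a)`-matching problem -/

variable {V : Type*} [Fintype V] [DecidableEq V]

/-- A matching state: a finite set of unordered node pairs. -/
abbrev State (V : Type*) := Finset (Sym2 V)

/-- Every pair in `M` is non-diagonal, and every node is incident
to at most `b` pairs of `M` (a `b`-matching). -/
def DegLE (b : ℕ) (M : State V) : Prop :=
  (∀ e ∈ M, ¬ e.IsDiag) ∧ ∀ v : V, (M.filter (fun e => v ∈ e)).card ≤ b

/-- A schedule: `M i` is the matching with which the `i`-th request (0-based)
is served; right after serving it, the matching is changed to `M (i+1)`. -/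
abbrev Schedule (V : Type*) := ℕ → State V

/-- A feasible schedule for degree bound `b`: it starts with the empty matching
and always satisfies the degree constraint. -/
def Feasible (b : ℕ) (M : Schedule V) : Prop :=
  M 0 = ∅ ∧ ∀ i, DegLE b (M i)

/-- Total cost of schedule `M` on the request sequence `I`, with pair distances `ℓ`
and reconfiguration cost `α`: serving a request `e` costs `1` if `e` is a matching
edge and `ℓ e` otherwise, and afterwards every pair added to or removed from the
matching costs `α`. -/
noncomputable def cost (ℓ : Sym2 V → ℝ≥0∞) (α : ℝ≥0∞) :
    List (Sym2 V) → Schedule V → ℝ≥0∞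
  | [], _ => 0
  | e :: I, M =>
      (if e ∈ M 0 then 1 else ℓ e) + α * ((M 0 ∆ M 1).card : ℝ≥0∞)
        + cost ℓ α I (fun i => M (i + 1))

/-- Optimal (offline) cost with degree bound `a`. -/
noncomputable def OPT (ℓ : Sym2 V → ℝ≥0∞) (α : ℝ≥0∞) (a : ℕ) (I : List (Sym2 V)) : ℝ≥0∞ :=
  ⨅ (M : Schedule V) (_ : Feasible a M), cost ℓ α I M

/-- A deterministic online algorithm: for every history (the list of requests
served so far) it outputs the current matching. -/
abbrev DetAlg (V : Type*) := List (Sym2 V) → State V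

/-- The schedule produced by online algorithm `A` on input `I`. -/
def run (A : DetAlg V) (I : List (Sym2 V)) : Schedule V := fun i => A (I.take i)

/-- An online algorithm is feasible for degree bound `b` if it starts with the
empty matching and always satisfies the degree constraint. -/
def AlgOK (b : ℕ) (A : DetAlg V) : Prop :=
  A [] = ∅ ∧ ∀ h, DegLE b (A h)

/-- There is a deterministic `ρ`-competitive online algorithm for the
`(b,a)`-matching problem with distances `ℓ` and reconfiguration cost `α`
(the additive constant `β` must be independent of the request sequence). -/
def DetCompetitive (ℓ : Sym2 V → ℝ≥0∞) (α : ℝ≥0∞) (b a : ℕ) (ρ : ℝ≥0∞) : Prop :=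
  ∃ A : DetAlg V, AlgOK b A ∧ ∃ β : ℝ≥0∞, β ≠ ∞ ∧
    ∀ I : List (Sym2 V), (∀ e ∈ I, ¬ e.IsDiag) →
      cost ℓ α I (run A I) ≤ ρ * OPT ℓ α a I + β

/-- Expected cost of a randomized online algorithm, modeled as a probability
distribution over deterministic online algorithms (oblivious adversary). -/
noncomputable def ExpCost (ℓ : Sym2 V → ℝ≥0∞) (α : ℝ≥0∞) (p : PMF (DetAlg V))
    (I : List (Sym2 V)) : ℝ≥0∞ :=
  ∑' A : DetAlg V, p A * cost ℓ α I (run A I)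

/-- There is a randomized `ρ`-competitive online algorithm for the
`(b,a)`-matching problem. -/
def RandCompetitive (ℓ : Sym2 V → ℝ≥0∞) (α : ℝ≥0∞) (b a : ℕ) (ρ : ℝ≥0∞) : Prop :=
  ∃ p : PMF (DetAlg V), (∀ A ∈ p.support, AlgOK b A) ∧ ∃ β : ℝ≥0∞, β ≠ ∞ ∧
    ∀ I : List (Sym2 V), (∀ e ∈ I, ¬ e.IsDiag) →
      ExpCost ℓ α p I ≤ ρ * OPT ℓ α a I + β

/-- Shortest-path distance of an unordered pair of nodes in the graph `G`. -/
noncomputable def gdist (G : SimpleGraph V) : Sym2 V → ℝ≥0∞ :=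
  Sym2.lift ⟨fun u v => (G.dist u v : ℝ≥0∞), fun u v => by simp [SimpleGraph.dist_comm]⟩

/-- `ℓ_max`, the largest pair distance. -/
noncomputable def lmax (ℓ : Sym2 V → ℝ≥0∞) : ℝ≥0∞ := Finset.univ.sup ℓ

/-- `γ = 1 + ℓ_max / α`. -/
noncomputable def gamma (ℓ : Sym2 V → ℝ≥0∞) (α : ℝ≥0∞) : ℝ≥0∞ := 1 + lmax ℓ / α

/-- The number of unordered pairs of distinct nodes, `|V²|`. -/
def nPairs (V : Type*) [Fintype V] [DecidableEq V] : ℕ :=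
  (Finset.univ.filter (fun e : Sym2 V => ¬ e.IsDiag)).card

/-! ### Reduction to the uniform case: special requests -/

/-- `k_e = ⌈α / ℓ_e⌉`. -/
noncomputable def kval (ℓ : Sym2 V → ℝ≥0∞) (α : ℝ≥0∞) (e : Sym2 V) : ℕ :=
  ⌈(α / ℓ e).toReal⌉₊

/-- The positions of the special requests of `I`: for every pair `e`
independently, every `k e`-th request to `e` in `I` is special. -/
def specialIdx (k : Sym2 V → ℕ) (I : List (Sym2 V)) : List ℕ :=
  (List.range I.length).filter (fun i =>
    match I[i]? with
    | some e => decide (k e ∣ (I.take (i + 1)).count e)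
    | none => false)

/-- The subsequence of special requests of `I` (the uniform instance `I₁`). -/
def specialSub (k : Sym2 V → ℕ) (I : List (Sym2 V)) : List (Sym2 V) :=
  (specialIdx k I).filterMap (fun i => I[i]?)

/-! ### Paging (forced fetching) -/

section Paging

variable {P : Type*} [DecidableEq P]

/-- A cache schedule starting from the empty cache, with cache size at most `b`:
`C i` is the cache content when the `i`-th request (0-based) arrives; right after
serving it, the cache is changed to `C (i+1)`. -/
def CacheLE (b : ℕ) (C : ℕ → Finset P) : Prop :=
  C 0 = ∅ ∧ ∀ i, (C i).card ≤ b

/-- Forced fetching: every requested page is in the cache immediately after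
its request is served.  (For matching schedules, this is the *forcing
property*: the requested pair is in the matching right after being served.) -/
def Served : List P → (ℕ → Finset P) → Prop
  | [], _ => True
  | e :: I, C => e ∈ C 1 ∧ Served I (fun i => C (i + 1))

/-- Total fetch cost of a cache schedule: `1` per page brought into the cache
(evictions are free). -/
noncomputable def fetchCost : List P → (ℕ → Finset P) → ℝ≥0∞
  | [], _ => 0
  | _ :: I, C => ((C 1 \ C 0).card : ℝ≥0∞) + fetchCost I (fun i => C (i + 1))

/-- Optimal offline cost of paging (forced fetching) with cache size `a`. -/
noncomputable def pOPT (a : ℕ) (I : List P) : ℝ≥0∞ :=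
  ⨅ (C : ℕ → Finset P) (_ : CacheLE a C ∧ Served I C), fetchCost I C

/-- An online paging algorithm: for every history it outputs the cache content. -/
abbrev PagingAlg (P : Type*) := List P → Finset P

/-- The cache schedule produced by online paging algorithm `B` on input `I`. -/
def prun (B : PagingAlg P) (I : List P) : ℕ → Finset P := fun i => B (I.take i)

/-- An online paging algorithm for cache size `b` with forced fetching: it starts
with the empty cache, respects the cache size, and always fetches the requested page. -/
def PagingAlgOK (b : ℕ) (B : PagingAlg P) : Prop :=
  B [] = ∅ ∧ (∀ h, (B h).card ≤ b) ∧ ∀ h e, e ∈ B (h ++ [e])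

/-- There is a deterministic `ρ`-competitive online algorithm for the
`(b,a)`-paging problem (forced fetching). -/
def PDetCompetitive (P : Type*) [DecidableEq P] (b a : ℕ) (ρ : ℝ≥0∞) : Prop :=
  ∃ B : PagingAlg P, PagingAlgOK b B ∧ ∃ β : ℝ≥0∞, β ≠ ∞ ∧
    ∀ I : List P, fetchCost I (prun B I) ≤ ρ * pOPT a I + β

/-- Expected fetch cost of a randomized paging algorithm, modeled as a
probability distribution over deterministic paging algorithms. -/
noncomputable def pExpCost (p : PMF (PagingAlg P)) (I : List P) : ℝ≥0∞ :=
  ∑' B : PagingAlg P, p B * fetchCost I (prun B I)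

/-- There is a randomized `ρ`-competitive online algorithm for the
`(b,a)`-paging problem (forced fetching). -/
def PRandCompetitive (P : Type*) [DecidableEq P] (b a : ℕ) (ρ : ℝ≥0∞) : Prop :=
  ∃ p : PMF (PagingAlg P), (∀ B ∈ p.support, PagingAlgOK b B) ∧ ∃ β : ℝ≥0∞, β ≠ ∞ ∧
    ∀ I : List P, pExpCost p I ≤ ρ * pOPT a I + β

/-! ### Paging with bypassing -/

/-- Cost of a cache schedule in paging *with bypassing*: a request to a cached
page is free, a request to an uncached page costs `1`, and every page brought
into the cache costs `1` (evictions are free). -/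
noncomputable def bpCost : List P → (ℕ → Finset P) → ℝ≥0∞
  | [], _ => 0
  | e :: I, C =>
      (if e ∈ C 0 then 0 else 1) + ((C 1 \ C 0).card : ℝ≥0∞)
        + bpCost I (fun i => C (i + 1))

/-- Optimal offline cost of paging with bypassing, cache size `a`. -/
noncomputable def bpOPT (a : ℕ) (I : List P) : ℝ≥0∞ :=
  ⨅ (C : ℕ → Finset P) (_ : CacheLE a C), bpCost I C

/-- There is a deterministic `ρ`-competitive online algorithm for
`(b,a)`-paging with bypassing. -/
def BPDetCompetitive (P : Type*) [DecidableEq P] (b a : ℕ) (ρ : ℝ≥0∞) : Prop :=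
  ∃ B : PagingAlg P, (B [] = ∅ ∧ ∀ h, (B h).card ≤ b) ∧ ∃ β : ℝ≥0∞, β ≠ ∞ ∧
    ∀ I : List P, bpCost I (prun B I) ≤ ρ * bpOPT a I + β

/-- Expected cost of a randomized algorithm for paging with bypassing. -/
noncomputable def bpExpCost (p : PMF (PagingAlg P)) (I : List P) : ℝ≥0∞ :=
  ∑' B : PagingAlg P, p B * bpCost I (prun B I)

/-- There is a randomized `ρ`-competitive online algorithm for
`(b,a)`-paging with bypassing. -/
def BPRandCompetitive (P : Type*) [DecidableEq P] (b a : ℕ) (ρ : ℝ≥0∞) : Prop :=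
  ∃ p : PMF (PagingAlg P), (∀ B ∈ p.support, B [] = ∅ ∧ ∀ h, (B h).card ≤ b) ∧
    ∃ β : ℝ≥0∞, β ≠ ∞ ∧ ∀ I : List P, bpExpCost p I ≤ ρ * bpOPT a I + β

end Paging

/-! ### Constructions used in the reductions -/

/-- The subsequence `I_v` of requests of `I` having `v` as an endpoint. -/
def subInput (I : List (Sym2 V)) (v : V) : List (Sym2 V) :=
  I.filter (fun e => decide (v ∈ e))

/-- The matching schedule combining per-node paging algorithms `A v`: a pair is
a matching edge iff it lies in the caches of both of its endpoints. -/
def combSchedule (A : V → PagingAlg (Sym2 V)) (I : List (Sym2 V)) : Schedule V :=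
  fun i => Finset.univ.filter
    (fun e : Sym2 V => ¬ e.IsDiag ∧
      ∀ v : V, v ∈ e → e ∈ A v ((I.take i).filter (fun q => decide (v ∈ q))))

/-- The positions in `I` of the requests having `v` as an endpoint. -/
def idxs (I : List (Sym2 V)) (v : V) : List ℕ :=
  (List.range I.length).filter (fun i =>
    match I[i]? with
    | some e => decide (v ∈ e)
    | none => false)

/-- The cache schedule at node `v` induced by a matching schedule `M`
(repeating the actions of `M` pertaining to pairs with endpoint `v`):
after the `t`-th request of `I_v` the cache holds exactly the matching
edges incident to `v`. -/
def inducedCache (I : List (Sym2 V)) (M : Schedule V) (v : V) : ℕ → Finset (Sym2 V)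
  | 0 => ∅
  | t + 1 => (M ((idxs I v).getD t I.length + 1)).filter (fun e => v ∈ e)

/-- The star graph on `Fin (n+1)`, with center `0` joined to every other node. -/
def starGraph (n : ℕ) : SimpleGraph (Fin (n + 1)) :=
  SimpleGraph.fromRel (fun u _ => u = 0)

/-- Replacing each paging request `i` by a block of `α` consecutive matching
requests to the pair `{v₀, v_i}` of the star graph. -/
def blocks (n α : ℕ) (J : List (Fin n)) : List (Sym2 (Fin (n + 1))) :=
  (J.map (fun i => List.replicate α s((0 : Fin (n + 1)), i.succ))).flatten

/-! ### auxiliary lemmas -/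

lemma cost_uniform_eq (I : List (Sym2 V)) (M : Schedule V) :
    cost (fun _ : Sym2 V => 1) 1 I M
      = (I.length : ℝ≥0∞)
        + ∑ i ∈ Finset.range I.length, ((M i ∆ M (i+1)).card : ℝ≥0∞) := by
  induction I generalizing M with
  | nil => simp [cost]
  | cons e I ih =>
      rw [cost, ih]
      rw [List.length_cons, Finset.sum_range_succ']
      push_cast
      ring_nf
      rw [ite_self]

lemma cost_le (ℓ : Sym2 V → ℝ≥0∞) (α : ℝ≥0∞) (I : List (Sym2 V)) (M : Schedule V)
    (h1 : ∀ e ∈ I, 1 ≤ ℓ e) :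
    cost ℓ α I M
      ≤ (I.map ℓ).sum
        + α * ∑ i ∈ Finset.range I.length, ((M i ∆ M (i+1)).card : ℝ≥0∞) := by
  induction I generalizing M with
  | nil => simp [cost]
  | cons e I ih =>
      rw [cost, List.map_cons, List.sum_cons, List.length_cons, Finset.sum_range_succ',
        mul_add]
      have hserve : (if e ∈ M 0 then 1 else ℓ e) ≤ ℓ e := by
        split
        · exact h1 e List.mem_cons_self
        · exact le_rfl
      calc (if e ∈ M 0 then 1 else ℓ e) + α * ((M 0 ∆ M 1).card : ℝ≥0∞)
            + cost ℓ α I (fun i => M (i + 1))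
          ≤ ℓ e + α * ((M 0 ∆ M 1).card : ℝ≥0∞)
            + ((I.map ℓ).sum
              + α * ∑ i ∈ Finset.range I.length, ((M (i+1) ∆ M (i+1+1)).card : ℝ≥0∞)) := by
            gcongr
            exact ih _ (fun e he => h1 e (List.mem_cons_of_mem _ he))
        _ = ℓ e + (I.map ℓ).sum
            + (α * ∑ i ∈ Finset.range I.length, ((M (i+1) ∆ M (i+1+1)).card : ℝ≥0∞)
              + α * ((M 0 ∆ M 1).card : ℝ≥0∞)) := by ring

lemma tele (M₁ : Schedule V) (c : ℕ → ℕ) (h0 : c 0 = 0)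
    (hstep : ∀ i, c i ≤ c (i+1) ∧ c (i+1) ≤ c i + 1) (n : ℕ) :
    ∑ i ∈ Finset.range n, ((M₁ (c i) ∆ M₁ (c (i+1))).card : ℝ≥0∞)
      = ∑ t ∈ Finset.range (c n), ((M₁ t ∆ M₁ (t+1)).card : ℝ≥0∞) := by
  induction n with
  | zero => simp [h0]
  | succ n ih =>
      rw [Finset.sum_range_succ, ih]
      rcases (hstep n) with ⟨hle, hle'⟩
      rcases Nat.eq_or_lt_of_le hle with heq | hlt
      · rw [← heq]
        simp [symmDiff_self]
      · have : c (n+1) = c n + 1 := by omega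
        rw [this, Finset.sum_range_succ]

lemma countP_lt_succ_le (l : List ℕ) (i : ℕ) :
    l.countP (fun j => decide (j < i+1)) ≤ l.countP (fun j => decide (j < i)) + l.count i := by
  induction l with
  | nil => simp
  | cons a l ih =>
      rw [List.countP_cons, List.countP_cons, List.count_cons]
      rcases lt_trichotomy a i with h | h | h
      · have e1 : decide (a < i+1) = true := by simp only [decide_eq_true_eq]; omega
        have e2 : decide (a < i) = true := by simp only [decide_eq_true_eq]; omega
        have e3 : (a == i) = false := by simp only [beq_eq_false_iff_ne, ne_eq]; omega
        rw [e1, e2, e3]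
        split_ifs <;> omega
      · subst h
        have e1 : decide (a < a+1) = true := by simp only [decide_eq_true_eq]; omega
        have e2 : decide (a < a) = false := by simp only [decide_eq_false_iff_not]; omega
        have e3 : (a == a) = true := by simp
        rw [e1, e2, e3]
        split_ifs <;> omega
      · have e1 : decide (a < i+1) = false := by simp only [decide_eq_false_iff_not]; omega
        have e2 : decide (a < i) = false := by simp only [decide_eq_false_iff_not]; omega
        have e3 : (a == i) = false := by simp only [beq_eq_false_iff_ne, ne_eq]; omega
        rw [e1, e2, e3]
        split_ifs <;> omega

lemma length_filterMap_getElem (I : List (Sym2 V)) (l : List ℕ)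
    (h : ∀ i ∈ l, i < I.length) :
    (l.filterMap (fun i => I[i]?)).length = l.length := by
  induction l with
  | nil => simp
  | cons a l ih =>
      have ha : I[a]? = some (I[a]'(h a List.mem_cons_self)) :=
        List.getElem?_eq_getElem _
      rw [List.filterMap_cons, ha, List.length_cons, List.length_cons,
        ih (fun i hi => h i (List.mem_cons_of_mem _ hi))]

lemma specialIdx_mem_lt (k : Sym2 V → ℕ) (I : List (Sym2 V)) :
    ∀ i ∈ specialIdx k I, i < I.length := by
  intro i hi
  have := List.mem_filter.mp hi
  exact List.mem_range.mp this.1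

lemma specialIdx_nodup (k : Sym2 V → ℕ) (I : List (Sym2 V)) :
    (specialIdx k I).Nodup := List.nodup_range.filter _

lemma map_sum_eq_count (ℓ : Sym2 V → ℝ≥0∞) (I : List (Sym2 V)) :
    (I.map ℓ).sum = ∑ e ∈ Finset.univ, (I.count e : ℝ≥0∞) * ℓ e := by
  induction I with
  | nil => simp
  | cons a I ih =>
      rw [List.map_cons, List.sum_cons, ih]
      have : ∀ e : Sym2 V, ((a :: I).count e : ℝ≥0∞) * ℓ e
          = (I.count e : ℝ≥0∞) * ℓ e + (if a = e then ℓ e else 0) := by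
        intro e
        rw [List.count_cons]
        by_cases h : a = e <;> simp [h] <;> push_cast <;> ring
      rw [Finset.sum_congr rfl (fun e _ => this e), Finset.sum_add_distrib,
        Finset.sum_ite_eq Finset.univ a ℓ]
      simp
      ring

lemma specialIdx_append (k : Sym2 V → ℕ) (J : List (Sym2 V)) (e' : Sym2 V) :
    (specialIdx k (J ++ [e'])).length
      = (specialIdx k J).length + (if k e' ∣ J.count e' + 1 then 1 else 0) := by
  unfold specialIdx
  rw [List.length_append, List.length_singleton, List.range_succ, List.filter_append,
    List.length_append]
  congr 1
  · congr 1
    apply List.filter_congr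
    intro i hi
    have hi' : i < J.length := List.mem_range.mp hi
    rw [List.getElem?_append_left hi', List.take_append_of_le_length (by omega)]
  · have hg : (J ++ [e'])[J.length]? = some e' := by simp
    have ht : (J ++ [e']).take (J.length + 1) = J ++ [e'] := by
      apply List.take_of_length_le
      simp
    rw [List.filter_singleton]
    simp only [hg, ht, List.count_append, List.count_singleton]
    by_cases h : k e' ∣ J.count e' + 1 <;> simp [h]

lemma specialIdx_length (k : Sym2 V → ℕ) (I : List (Sym2 V)) :
    (specialIdx k I).length = ∑ e ∈ Finset.univ, I.count e / k e := by
  induction I using List.reverseRecOn with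
  | nil => simp [specialIdx]
  | append_singleton J e' ih =>
      rw [specialIdx_append, ih]
      have : ∀ e : Sym2 V, (J ++ [e']).count e / k e
          = J.count e / k e + (if e = e' then (if k e' ∣ J.count e' + 1 then 1 else 0) else 0) := by
        intro e
        by_cases h : e = e'
        · subst h
          have hc : (J ++ [e]).count e = J.count e + 1 := by simp
          rw [hc, Nat.succ_div, if_pos rfl]
        · have hc : (J ++ [e']).count e = J.count e := by
            simp [List.count_append, List.count_singleton', h, Ne.symm h]
          rw [hc, if_neg h]
          simp
      rw [Finset.sum_congr rfl (fun e _ => this e), Finset.sum_add_distrib,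
        Finset.sum_ite_eq' Finset.univ e' _]
      simp


/-- Let `I₁` be the subsequence of special requests of `I`
(every `k_e = ⌈α/ℓ_e⌉`-th request to each pair `e`), viewed as a uniform instance,
and let `ALG₁` be any algorithm producing schedule `M₁` on `I₁`.  The algorithm
`ALG` that replays the reconfigurations of `M₁` (changing the matching only at
special requests) satisfies `ALG(I) ≤ 2γα·ALG₁(I₁) + |V²|·γα`. -/
theorem statement1 (V : Type) [Fintype V] [DecidableEq V]
    (G : SimpleGraph V) (hG : G.Connected)
    (α : ℝ≥0∞) (hα1 : 1 ≤ α) (hαtop : α ≠ ∞)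
    (b a : ℕ) (hab : a ≤ b)
    (I : List (Sym2 V)) (hI : ∀ e ∈ I, ¬ e.IsDiag)
    (M₁ : Schedule V) (hM₁ : Feasible b M₁) :
    cost (gdist G) α I
        (fun i => M₁ ((specialIdx (kval (gdist G) α) I).countP (fun j => decide (j < i))))
      ≤ 2 * gamma (gdist G) α * α *
          cost (fun _ : Sym2 V => 1) 1 (specialSub (kval (gdist G) α) I) M₁
        + (nPairs V : ℝ≥0∞) * gamma (gdist G) α * α := by
  classical
  set ℓ := gdist G with hℓ
  set k := kval ℓ α with hk
  set S := specialIdx k I with hS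
  set γα := gamma ℓ α * α with hγα
  have hα0 : α ≠ 0 := by
    intro h; rw [h] at hα1; simp at hα1
  -- distance facts
  have hdist : ∀ e : Sym2 V, ¬ e.IsDiag → 1 ≤ ℓ e ∧ ℓ e ≠ ∞ := by
    intro e
    induction e using Sym2.ind with
    | _ u v =>
      intro he
      have huv : u ≠ v := by simpa using he
      have h1 : 0 < G.dist u v := hG.pos_dist_of_ne huv
      constructor
      · show (1 : ℝ≥0∞) ≤ (G.dist u v : ℝ≥0∞)
        exact_mod_cast h1
      · show (G.dist u v : ℝ≥0∞) ≠ ∞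
        exact ENNReal.natCast_ne_top _
  have hdist_top : ∀ e : Sym2 V, ℓ e ≠ ∞ := by
    intro e
    induction e using Sym2.ind with
    | _ u v => exact ENNReal.natCast_ne_top _
  have hlmax_top : lmax ℓ ≠ ∞ := by
    have : lmax ℓ < ∞ := by
      rw [lmax]
      apply Finset.sup_lt_iff (by simp) |>.mpr
      intro e _
      exact lt_top_iff_ne_top.mpr (hdist_top e)
    exact this.ne
  have hγα_eq : γα = α + lmax ℓ := by
    rw [hγα, gamma, add_mul, one_mul, ENNReal.div_mul_cancel hα0 hαtop]
  -- per-edge bounds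
  have hke : ∀ e : Sym2 V, ¬ e.IsDiag → 1 ≤ k e := by
    intro e he
    have h1 := hdist e he
    have hnz : α / ℓ e ≠ 0 := by
      simp only [ne_eq, ENNReal.div_eq_zero_iff, not_or]
      exact ⟨hα0, h1.2⟩
    have hnt : α / ℓ e ≠ ∞ := by
      have hℓ0 : ℓ e ≠ 0 := by
        intro h; rw [h] at h1; simpa using h1.1
      exact (ENNReal.div_lt_top hαtop hℓ0).ne
    rw [hk, kval]
    exact Nat.one_le_ceil_iff.mpr (ENNReal.toReal_pos hnz hnt)
  have hkℓ : ∀ e : Sym2 V, ¬ e.IsDiag → ℓ e * (k e : ℝ≥0∞) ≤ γα := by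
    intro e he
    have h1 := hdist e he
    have hℓ0 : ℓ e ≠ 0 := by
      intro h; rw [h] at h1; simpa using h1.1
    have hnt : α / ℓ e ≠ ∞ := (ENNReal.div_lt_top hαtop hℓ0).ne
    have hcast : ((k e : ℕ) : ℝ≥0∞) ≤ α / ℓ e + 1 := by
      have hx : (0:ℝ) ≤ (α / ℓ e).toReal := ENNReal.toReal_nonneg
      have hceil : ((⌈(α / ℓ e).toReal⌉₊ : ℕ) : ℝ) ≤ (α / ℓ e).toReal + 1 :=
        (Nat.ceil_lt_add_one hx).le
      have := ENNReal.ofReal_le_ofReal hceil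
      rw [ENNReal.ofReal_natCast, ENNReal.ofReal_add hx (by norm_num),
        ENNReal.ofReal_toReal hnt, ENNReal.ofReal_one] at this
      rw [hk, kval]
      exact this
    calc ℓ e * (k e : ℝ≥0∞) ≤ ℓ e * (α / ℓ e + 1) := by gcongr
      _ = ℓ e * (α / ℓ e) + ℓ e := by ring
      _ = α + ℓ e := by rw [ENNReal.mul_div_cancel hℓ0 h1.2]
      _ ≤ α + lmax ℓ := by
          gcongr
          exact Finset.le_sup (Finset.mem_univ e)
      _ = γα := hγα_eq.symm
  have hedge : ∀ e : Sym2 V, ¬ e.IsDiag →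
      (I.count e : ℝ≥0∞) * ℓ e ≤ γα * ((I.count e / k e : ℕ) + 1) := by
    intro e he
    have hk1 : 0 < k e := hke e he
    have hnat : I.count e ≤ k e * (I.count e / k e + 1) :=
      (Nat.lt_mul_div_succ _ hk1).le
    have hcast : (I.count e : ℝ≥0∞) ≤ (k e : ℝ≥0∞) * ((I.count e / k e : ℕ) + 1) := by
      exact_mod_cast hnat
    calc (I.count e : ℝ≥0∞) * ℓ e
        ≤ ((k e : ℝ≥0∞) * ((I.count e / k e : ℕ) + 1)) * ℓ e := by gcongr
      _ = (ℓ e * (k e : ℝ≥0∞)) * ((I.count e / k e : ℕ) + 1) := by ring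
      _ ≤ γα * ((I.count e / k e : ℕ) + 1) := by gcongr; exact hkℓ e he
  -- the counter
  set c : ℕ → ℕ := fun i => S.countP (fun j => decide (j < i)) with hcdef
  have hc0 : c 0 = 0 := by
    apply List.countP_eq_zero.mpr
    intro a _
    simp
  have hcmono : ∀ i, c i ≤ c (i+1) := by
    intro i
    apply List.countP_mono_left
    intro a _ h
    simp only [decide_eq_true_eq] at h ⊢
    omega
  have hcstep : ∀ i, c (i+1) ≤ c i + 1 := by
    intro i
    have h1 := countP_lt_succ_le S i
    have h2 : S.count i ≤ 1 := List.nodup_iff_count_le_one.mp (specialIdx_nodup k I) i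
    simp only [hcdef]
    omega
  have hcN : c I.length = S.length := by
    apply List.countP_eq_length.mpr
    intro a ha
    simpa using specialIdx_mem_lt k I a ha
  have hL : (specialSub k I).length = S.length :=
    length_filterMap_getElem I S (specialIdx_mem_lt k I)
  -- movement identity
  have htele := tele M₁ c hc0 (fun i => ⟨hcmono i, hcstep i⟩) I.length
  rw [hcN] at htele
  -- uniform cost
  have hcost1 : cost (fun _ : Sym2 V => 1) 1 (specialSub k I) M₁
      = (S.length : ℝ≥0∞)
        + ∑ t ∈ Finset.range S.length, ((M₁ t ∆ M₁ (t+1)).card : ℝ≥0∞) := by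
    rw [cost_uniform_eq, hL]
  -- serving bound
  have hserve : (I.map ℓ).sum ≤ γα * (S.length : ℝ≥0∞) + (nPairs V : ℝ≥0∞) * γα := by
    rw [map_sum_eq_count]
    set D := Finset.univ.filter (fun e : Sym2 V => ¬ e.IsDiag) with hD
    have hzero : ∑ e ∈ Finset.univ, (I.count e : ℝ≥0∞) * ℓ e
        = ∑ e ∈ D, (I.count e : ℝ≥0∞) * ℓ e := by
      symm
      apply Finset.sum_filter_of_ne
      intro e _ hne
      apply hI
      by_contra hmem
      rw [List.count_eq_zero_of_not_mem hmem] at hne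
      simp at hne
    rw [hzero]
    have hsum1 : ∑ e ∈ D, (I.count e : ℝ≥0∞) * ℓ e
        ≤ ∑ e ∈ D, γα * ((I.count e / k e : ℕ) + 1) := by
      apply Finset.sum_le_sum
      intro e heD
      exact hedge e (Finset.mem_filter.mp heD).2
    have hsum2 : ∑ e ∈ D, γα * ((I.count e / k e : ℕ) + 1)
        = γα * (∑ e ∈ D, ((I.count e / k e : ℕ) : ℝ≥0∞)) + (nPairs V : ℝ≥0∞) * γα := by
      rw [← Finset.mul_sum, Finset.sum_add_distrib, Finset.sum_const, mul_add]
      congr 1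
      rw [nPairs, ← hD, nsmul_eq_mul, mul_one]
      ring
    have hsum3 : ∑ e ∈ D, ((I.count e / k e : ℕ) : ℝ≥0∞) ≤ (S.length : ℝ≥0∞) := by
      rw [← Nat.cast_sum]
      have : ∑ e ∈ D, I.count e / k e ≤ ∑ e ∈ Finset.univ, I.count e / k e :=
        Finset.sum_le_sum_of_subset (Finset.filter_subset _ _)
      rw [hS, specialIdx_length k I]
      exact_mod_cast this
    calc ∑ e ∈ D, (I.count e : ℝ≥0∞) * ℓ e
        ≤ γα * (∑ e ∈ D, ((I.count e / k e : ℕ) : ℝ≥0∞)) + (nPairs V : ℝ≥0∞) * γα := by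
          rw [← hsum2]; exact hsum1
      _ ≤ γα * (S.length : ℝ≥0∞) + (nPairs V : ℝ≥0∞) * γα := by gcongr
  -- assemble
  have hαγ : α ≤ γα := by
    rw [hγα_eq]; exact le_self_add
  have h1le : ∀ e ∈ I, 1 ≤ ℓ e := fun e he => (hdist e (hI e he)).1
  have hUB := cost_le ℓ α I (fun i => M₁ (c i)) h1le
  set SG := ∑ t ∈ Finset.range S.length, ((M₁ t ∆ M₁ (t+1)).card : ℝ≥0∞) with hSG
  calc cost ℓ α I (fun i => M₁ (c i))
      ≤ (I.map ℓ).sum + α * ∑ i ∈ Finset.range I.length,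
          ((M₁ (c i) ∆ M₁ (c (i+1))).card : ℝ≥0∞) := hUB
    _ = (I.map ℓ).sum + α * SG := by rw [htele]
    _ ≤ (γα * (S.length : ℝ≥0∞) + (nPairs V : ℝ≥0∞) * γα) + γα * SG := by gcongr
    _ = γα * ((S.length : ℝ≥0∞) + SG) + (nPairs V : ℝ≥0∞) * γα := by ring
    _ = γα * cost (fun _ : Sym2 V => 1) 1 (specialSub k I) M₁ + (nPairs V : ℝ≥0∞) * γα := by
        rw [hcost1]
    _ ≤ 2 * gamma ℓ α * α * cost (fun _ : Sym2 V => 1) 1 (specialSub k I) M₁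
        + (nPairs V : ℝ≥0∞) * gamma ℓ α * α := by
        rw [hγα]
        have key : gamma ℓ α * α ≤ 2 * gamma ℓ α * α := by
          rw [show (2:ℝ≥0∞) * gamma ℓ α * α = gamma ℓ α * α + gamma ℓ α * α by ring]
          exact le_self_add
        exact add_le_add (mul_le_mul_left key _) (le_of_eq (mul_assoc _ _ _).symm)
end BM
end

section
/- Let OFF be a feasible offline solution for an input I of the uniform a-matching problem satisfying the forcing property (immediately after each request is served, the requested pair is in the matching). For each node v, let OFF_v be the induced cache schedule on the subsequence I_v of requests having v as an endpoint, obtained by repeating all of OFF's matching actions pertaining to pairs with endpoint v. Then each OFF_v is a feasible solution to the a-paging problem with forced fetching on I_v, and ∑_{v∈V} OFF_v(I_v) ≤ 2·OFF(I), where OFF_v(I_v) counts only fetch costs. -/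
open scoped ENNReal symmDiff

namespace BM

/-! ### The (dynamic, online) `(b,a)`-matching problem -/

variable {V : Type*} [Fintype V] [DecidableEq V]

/-! ### Auxiliary lemmas for Statement 7 -/

section Aux

variable {V : Type*} [Fintype V] [DecidableEq V]

/-- Generalized induced cache: starts from the trace of `M 0` at `v`. -/
def gcache (I : List (Sym2 V)) (M : Schedule V) (v : V) : ℕ → Finset (Sym2 V)
  | 0 => (M 0).filter (fun e => v ∈ e)
  | t + 1 => (M ((idxs I v).getD t I.length + 1)).filter (fun e => v ∈ e)

lemma subInput_cons (e : Sym2 V) (I : List (Sym2 V)) (v : V) :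
    subInput (e :: I) v = if v ∈ e then e :: subInput I v else subInput I v := by
  simp [subInput, List.filter_cons]

lemma getD_map_succ (l : List ℕ) (t d : ℕ) :
    (l.map (· + 1)).getD t (d + 1) = l.getD t d + 1 := by
  simp only [List.getD_eq_getElem?_getD, List.getElem?_map]
  cases l[t]? <;> rfl

lemma idxs_cons (e : Sym2 V) (I : List (Sym2 V)) (v : V) :
    idxs (e :: I) v =
      if v ∈ e then 0 :: (idxs I v).map (· + 1) else (idxs I v).map (· + 1) := by
  have hmap : (List.range I.length).map Nat.succ = (List.range I.length).map (· + 1) := by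
    simp
  unfold idxs
  rw [List.length_cons, List.range_succ_eq_map, List.filter_cons, hmap, List.filter_map]
  have hpred : ((fun i => match (e :: I)[i]? with
      | some q => decide (v ∈ q) | none => false) ∘ (· + 1))
      = (fun i => match I[i]? with | some q => decide (v ∈ q) | none => false) := by
    funext i
    simp [List.getElem?_cons_succ]
  rw [hpred]
  by_cases hv : v ∈ e <;> simp [hv]

lemma gcache_cons_mem (e : Sym2 V) (I : List (Sym2 V)) (M : Schedule V) (v : V)
    (hv : v ∈ e) :
    (fun t => gcache (e :: I) M v (t + 1)) = gcache I (fun i => M (i + 1)) v := by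
  funext t
  cases t with
  | zero => simp [gcache, idxs_cons, hv]
  | succ t =>
      simp only [gcache, idxs_cons, if_pos hv, List.length_cons, List.getD_cons_succ,
        getD_map_succ]

lemma gcache_cons_not_mem (e : Sym2 V) (I : List (Sym2 V)) (M : Schedule V) (v : V)
    (hv : ¬ v ∈ e) (t : ℕ) :
    gcache (e :: I) M v (t + 1) = gcache I (fun i => M (i + 1)) v (t + 1) := by
  simp only [gcache, idxs_cons, if_neg hv, List.length_cons, getD_map_succ]

lemma served_congr {P : Type*} [DecidableEq P] (J : List P) :
    ∀ (C C' : ℕ → Finset P), (∀ i, C (i + 1) = C' (i + 1)) → Served J C' → Served J C := by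
  induction J with
  | nil => intro _ _ _ _; trivial
  | cons e J ih =>
      rintro C C' h ⟨h1, h2⟩
      exact ⟨(h 0) ▸ h1, ih _ _ (fun i => h (i + 1)) h2⟩

lemma served_gcache (I : List (Sym2 V)) : ∀ (M : Schedule V), Served I M →
    ∀ v : V, Served (subInput I v) (gcache I M v) := by
  induction I with
  | nil => intro M _ v; trivial
  | cons e I ih =>
      rintro M ⟨h1, h2⟩ v
      by_cases hv : v ∈ e
      · rw [subInput_cons, if_pos hv]
        refine ⟨?_, ?_⟩
        · show e ∈ (M ((idxs (e :: I) v).getD 0 (e :: I).length + 1)).filter _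
          simp only [idxs_cons, if_pos hv, List.getD_cons_zero]
          exact Finset.mem_filter.2 ⟨h1, hv⟩
        · rw [show (fun i => gcache (e :: I) M v (i + 1))
              = gcache I (fun i => M (i + 1)) v from gcache_cons_mem e I M v hv]
          exact ih _ h2 v
      · rw [subInput_cons, if_neg hv]
        exact served_congr _ _ _ (fun i => gcache_cons_not_mem e I M v hv i)
          (ih _ h2 v)

lemma fetch_le {P : Type*} [DecidableEq P] (J : List P) (C C' : ℕ → Finset P)
    (h : ∀ i, C (i + 1) = C' (i + 1)) :
    fetchCost J C ≤ fetchCost J C' + ((C' 0 \ C 0).card : ℝ≥0∞) := by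
  cases J with
  | nil => simp [fetchCost]
  | cons e J =>
      have htail : (fun i => C (i + 1)) = (fun i => C' (i + 1)) := funext h
      show ((C 1 \ C 0).card : ℝ≥0∞) + fetchCost J (fun i => C (i + 1))
          ≤ ((C' 1 \ C' 0).card : ℝ≥0∞) + fetchCost J (fun i => C' (i + 1))
            + ((C' 0 \ C 0).card : ℝ≥0∞)
      rw [htail, h 0]
      have hsub : C' 1 \ C 0 ⊆ (C' 1 \ C' 0) ∪ (C' 0 \ C 0) := by
        intro x hx
        rw [Finset.mem_sdiff] at hx
        by_cases hx' : x ∈ C' 0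
        · exact Finset.mem_union_right _ (Finset.mem_sdiff.2 ⟨hx', hx.2⟩)
        · exact Finset.mem_union_left _ (Finset.mem_sdiff.2 ⟨hx.1, hx'⟩)
      have hcard : (C' 1 \ C 0).card ≤ (C' 1 \ C' 0).card + (C' 0 \ C 0).card :=
        le_trans (Finset.card_le_card hsub) (Finset.card_union_le _ _)
      calc ((C' 1 \ C 0).card : ℝ≥0∞) + fetchCost J (fun i => C' (i + 1))
          ≤ (((C' 1 \ C' 0).card + (C' 0 \ C 0).card : ℕ) : ℝ≥0∞)
            + fetchCost J (fun i => C' (i + 1)) := by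
              exact add_le_add_left (by exact_mod_cast hcard) _
        _ = ((C' 1 \ C' 0).card : ℝ≥0∞) + fetchCost J (fun i => C' (i + 1))
            + ((C' 0 \ C 0).card : ℝ≥0∞) := by push_cast; ring

lemma filter_sdiff_filter (A B : Finset (Sym2 V)) (v : V) :
    A.filter (fun e => v ∈ e) \ B.filter (fun e => v ∈ e)
      = (A \ B).filter (fun e => v ∈ e) := by
  ext x
  simp only [Finset.mem_sdiff, Finset.mem_filter]
  tauto

lemma card_filter_mem_eq_two (e : Sym2 V) (he : ¬ e.IsDiag) :
    (Finset.univ.filter (fun v : V => v ∈ e)).card = 2 := by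
  induction e with
  | _ x y =>
      have hxy : x ≠ y := by simpa [Sym2.isDiag_iff_proj_eq] using he
      have : (Finset.univ.filter (fun v : V => v ∈ s(x, y))) = {x, y} := by
        ext v
        simp [Sym2.mem_iff]
      rw [this, Finset.card_pair hxy]

lemma sum_card_filter_mem (A : Finset (Sym2 V)) (hA : ∀ e ∈ A, ¬ e.IsDiag) :
    ∑ v : V, (A.filter (fun e => v ∈ e)).card = 2 * A.card := by
  have : ∑ v : V, (A.filter (fun e => v ∈ e)).card
      = ∑ e ∈ A, (Finset.univ.filter (fun v : V => v ∈ e)).card := by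
    simp_rw [Finset.card_filter]
    rw [Finset.sum_comm]
  rw [this]
  rw [Finset.sum_congr rfl (fun e he => card_filter_mem_eq_two e (hA e he))]
  simp [mul_comm]

lemma master (I : List (Sym2 V)) : ∀ (M : Schedule V),
    (∀ i, ∀ e ∈ M i, ¬ e.IsDiag) →
    ∑ v : V, fetchCost (subInput I v) (gcache I M v)
      ≤ 2 * cost (fun _ : Sym2 V => 1) 1 I M := by
  induction I with
  | nil =>
      intro M _
      simp [subInput, fetchCost, cost]
  | cons e I ih =>
      intro M hd
      set M' : Schedule V := fun i => M (i + 1) with hM'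
      have key : ∀ v : V, fetchCost (subInput (e :: I) v) (gcache (e :: I) M v)
          ≤ fetchCost (subInput I v) (gcache I M' v)
            + ((((M 1 \ M 0).filter (fun q => v ∈ q)).card : ℕ) : ℝ≥0∞) := by
        intro v
        by_cases hv : v ∈ e
        · rw [subInput_cons, if_pos hv]
          show ((gcache (e :: I) M v 1 \ gcache (e :: I) M v 0).card : ℝ≥0∞)
              + fetchCost (subInput I v) (fun i => gcache (e :: I) M v (i + 1)) ≤ _
          rw [gcache_cons_mem e I M v hv]
          have h1 : gcache (e :: I) M v 1 = (M 1).filter (fun q => v ∈ q) := by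
            simp [gcache, idxs_cons, hv]
          have h0 : gcache (e :: I) M v 0 = (M 0).filter (fun q => v ∈ q) := rfl
          rw [h1, h0, filter_sdiff_filter, add_comm]
        · rw [subInput_cons, if_neg hv]
          refine le_trans (fetch_le _ _ _ (fun i => gcache_cons_not_mem e I M v hv i)) ?_
          have h0 : gcache (e :: I) M v 0 = (M 0).filter (fun q => v ∈ q) := rfl
          have h0' : gcache I M' v 0 = (M 1).filter (fun q => v ∈ q) := rfl
          rw [h0, h0', filter_sdiff_filter]
      have hsum : ∑ v : V, fetchCost (subInput (e :: I) v) (gcache (e :: I) M v)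
          ≤ (∑ v : V, fetchCost (subInput I v) (gcache I M' v))
            + ((2 * (M 1 \ M 0).card : ℕ) : ℝ≥0∞) := by
        refine le_trans (Finset.sum_le_sum (fun v _ => key v)) ?_
        rw [Finset.sum_add_distrib]
        refine add_le_add_right (le_of_eq ?_) _
        rw [← Nat.cast_sum]
        congr 1
        exact sum_card_filter_mem _ (fun q hq => hd 1 q (Finset.mem_sdiff.1 hq).1)
      refine le_trans hsum ?_
      have hcost : cost (fun _ : Sym2 V => 1) 1 (e :: I) M
          = (if e ∈ M 0 then (1 : ℝ≥0∞) else 1) + 1 * (((M 0 ∆ M 1).card : ℕ) : ℝ≥0∞)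
            + cost (fun _ : Sym2 V => 1) 1 I M' := rfl
      rw [hcost]
      have hdiag : (M 1 \ M 0).card ≤ (M 0 ∆ M 1).card := by
        refine Finset.card_le_card ?_
        intro x hx
        rw [Finset.mem_sdiff] at hx
        exact Finset.mem_symmDiff.2 (Or.inr ⟨hx.1, hx.2⟩)
      have h2 : ((2 * (M 1 \ M 0).card : ℕ) : ℝ≥0∞)
          ≤ 2 * (((M 0 ∆ M 1).card : ℕ) : ℝ≥0∞) := by
        push_cast
        exact mul_le_mul_right (by exact_mod_cast hdiag) 2
      calc (∑ v : V, fetchCost (subInput I v) (gcache I M' v))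
            + ((2 * (M 1 \ M 0).card : ℕ) : ℝ≥0∞)
          ≤ 2 * cost (fun _ : Sym2 V => 1) 1 I M'
            + 2 * (((M 0 ∆ M 1).card : ℕ) : ℝ≥0∞) := add_le_add (ih M' (fun i => hd (i + 1))) h2
        _ ≤ 2 * ((if e ∈ M 0 then (1 : ℝ≥0∞) else 1) + 1 * (((M 0 ∆ M 1).card : ℕ) : ℝ≥0∞)
            + cost (fun _ : Sym2 V => 1) 1 I M') := by
              rw [ite_self, one_mul, mul_add, mul_add]
              calc 2 * cost (fun _ : Sym2 V => 1) 1 I M'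
                    + 2 * (((M 0 ∆ M 1).card : ℕ) : ℝ≥0∞)
                  ≤ (2 * 1 + 2 * (((M 0 ∆ M 1).card : ℕ) : ℝ≥0∞))
                    + 2 * cost (fun _ : Sym2 V => 1) 1 I M' := by
                      rw [add_comm]
                      exact add_le_add (le_add_self) le_rfl
                _ = _ := rfl

end Aux

/-- Let `M` be a feasible offline solution for a uniform
`a`-matching input `I` with the forcing property.  For every node `v`, the
induced cache schedule on the subsequence `I_v` (repeating the actions of `M`
pertaining to pairs with endpoint `v`) is a feasible `a`-paging schedule with
forced fetching on `I_v`, and the total fetch cost satisfies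
`∑_{v∈V} OFF_v(I_v) ≤ 2·OFF(I)`. -/
theorem statement7 (V : Type) [Fintype V] [DecidableEq V]
    (a : ℕ) (I : List (Sym2 V)) (hI : ∀ e ∈ I, ¬ e.IsDiag)
    (M : Schedule V) (hM : Feasible a M) (hforce : Served I M) :
    (∀ v : V, CacheLE a (inducedCache I M v) ∧
        Served (subInput I v) (inducedCache I M v)) ∧
    ∑ v : V, fetchCost (subInput I v) (inducedCache I M v)
      ≤ 2 * cost (fun _ : Sym2 V => 1) 1 I M := by
  have hnd : ∀ i, ∀ e ∈ M i, ¬ e.IsDiag := fun i => (hM.2 i).1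
  have hg : ∀ v : V, gcache I M v = inducedCache I M v := by
    intro v
    funext t
    cases t with
    | zero => show (M 0).filter _ = ∅; rw [hM.1]; rfl
    | succ t => rfl
  refine ⟨fun v => ⟨⟨rfl, ?_⟩, ?_⟩, ?_⟩
  · intro t
    cases t with
    | zero => simp [inducedCache]
    | succ t =>
        show ((M ((idxs I v).getD t I.length + 1)).filter (fun e => v ∈ e)).card ≤ a
        exact (hM.2 _).2 v
  · rw [← hg v]
    exact served_gcache I M hforce v
  · have := master I M hnd
    simp_rw [hg] at this
    exact this
end BM
end
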